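/- The function s ↦ s / arccosh((4/3)·cosh(s/2) + 1/3) is monotonically increasing on (0, ∞). -/

import Mathlib

open Real

noncomputable def arccosh (x : ℝ) : ℝ := Real.log (x + Real.sqrt (x ^ 2 - 1))

lemma arccosh_cosh {y : ℝ} (hy : 0 ≤ y) : arccosh (Real.cosh y) = y := by
  have h1 : Real.cosh y ^ 2 - 1 = Real.sinh y ^ 2 := by
    have := Real.cosh_sq y; linarith
  have h2 : Real.sqrt (Real.cosh y ^ 2 - 1) = Real.sinh y := by
    rw [h1, Real.sqrt_sq (Real.sinh_nonneg_iff.2 hy)]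
  rw [arccosh, h2, Real.cosh_add_sinh, Real.log_exp]

lemma cosh_arccosh {x : ℝ} (hx : 1 ≤ x) : Real.cosh (arccosh x) = x := by
  have hs : Real.sqrt (x ^ 2 - 1) ^ 2 = x ^ 2 - 1 :=
    Real.sq_sqrt (by nlinarith)
  have hz : (0:ℝ) < x + Real.sqrt (x ^ 2 - 1) := by
    have := Real.sqrt_nonneg (x ^ 2 - 1); linarith
  rw [arccosh, Real.cosh_eq, Real.exp_log hz, Real.exp_neg, Real.exp_log hz]
  have hinv : (x + Real.sqrt (x ^ 2 - 1))⁻¹ = x - Real.sqrt (x ^ 2 - 1) := by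
    rw [inv_eq_iff_eq_inv, eq_comm, inv_eq_iff_eq_inv]
    · field_simp
      nlinarith
  rw [hinv]; ring

lemma arccosh_nonneg {x : ℝ} (hx : 1 ≤ x) : 0 ≤ arccosh x := by
  rw [arccosh]
  apply Real.log_nonneg
  have := Real.sqrt_nonneg (x ^ 2 - 1); linarith

/-- product-to-sum for cosh -/
lemma cosh_mul_cosh (x y : ℝ) :
    Real.cosh x * Real.cosh y = (Real.cosh (x + y) + Real.cosh (x - y)) / 2 := by
  rw [Real.cosh_add, Real.cosh_sub]; ring

/-- Key inequality: for `0 ≤ a ≤ u` and `1 ≤ l`,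
`cosh u * cosh (l*a) ≤ cosh (l*u) * cosh a`. -/
lemma key_ineq {a u l : ℝ} (ha : 0 ≤ a) (hau : a ≤ u) (hl : 1 ≤ l) :
    Real.cosh u * Real.cosh (l * a) ≤ Real.cosh (l * u) * Real.cosh a := by
  rw [cosh_mul_cosh, cosh_mul_cosh]
  have h1 : Real.cosh (u + l * a) ≤ Real.cosh (l * u + a) := by
    rw [Real.cosh_le_cosh]
    rw [abs_of_nonneg (by nlinarith), abs_of_nonneg (by nlinarith)]
    nlinarith
  have h2 : Real.cosh (u - l * a) ≤ Real.cosh (l * u - a) := by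
    rw [Real.cosh_le_cosh]
    rcases abs_cases (u - l * a) with ⟨h, h'⟩ | ⟨h, h'⟩ <;>
      rcases abs_cases (l * u - a) with ⟨g, g'⟩ | ⟨g, g'⟩ <;>
      rw [h, g] <;> nlinarith
  linarith

/-- half-angle decomposition of the relevant arccosh expression -/
lemma f_eq (s : ℝ) (hs : 0 ≤ s) :
    arccosh (4 / 3 * Real.cosh (s / 2) + 1 / 3)
      = 2 * arccosh (2 / Real.sqrt 3 * Real.cosh (s / 4)) := by
  have h3 : (0:ℝ) < Real.sqrt 3 := Real.sqrt_pos.2 (by norm_num)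
  have h3' : Real.sqrt 3 ^ 2 = 3 := Real.sq_sqrt (by norm_num)
  have hsqrt3 : Real.sqrt 3 < 2 := by nlinarith
  have hc1 : 1 ≤ Real.cosh (s / 4) := Real.one_le_cosh _
  have harg : 1 ≤ 2 / Real.sqrt 3 * Real.cosh (s / 4) := by
    have : 1 ≤ 2 / Real.sqrt 3 := (le_div_iff₀ h3).2 (by linarith)
    nlinarith
  set t := arccosh (2 / Real.sqrt 3 * Real.cosh (s / 4)) with ht
  have htn : 0 ≤ t := arccosh_nonneg harg
  have hct : Real.cosh t = 2 / Real.sqrt 3 * Real.cosh (s / 4) := cosh_arccosh harg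
  have hhalf : Real.cosh (s / 2) = 2 * Real.cosh (s / 4) ^ 2 - 1 := by
    have := Real.cosh_two_mul (s / 4)
    have h2 := Real.cosh_sq (s / 4)
    have : Real.cosh (2 * (s / 4)) = 2 * Real.cosh (s / 4) ^ 2 - 1 := by linarith
    rw [show s / 2 = 2 * (s / 4) by ring, this]
  have hcosh2t : Real.cosh (2 * t) = 4 / 3 * Real.cosh (s / 2) + 1 / 3 := by
    have := Real.cosh_two_mul t
    have h2 := Real.cosh_sq t
    have : Real.cosh (2 * t) = 2 * Real.cosh t ^ 2 - 1 := by linarith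
    rw [this, hct, hhalf]
    field_simp
    linear_combination (-8 * Real.cosh (s / 4) ^ 2) * h3'
  rw [← hcosh2t, arccosh_cosh (by linarith)]

theorem ratio_function_monotone :
    MonotoneOn (fun s : ℝ => s / arccosh (4 / 3 * Real.cosh (s / 2) + 1 / 3))
      (Set.Ioi 0) := by
  intro a ha b hb hab
  simp only [Set.mem_Ioi] at ha hb
  have h3 : (0:ℝ) < Real.sqrt 3 := Real.sqrt_pos.2 (by norm_num)
  have h3' : Real.sqrt 3 ^ 2 = 3 := Real.sq_sqrt (by norm_num)
  have hsqrt3 : Real.sqrt 3 < 2 := by nlinarith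
  have hk : 1 < 2 / Real.sqrt 3 := (lt_div_iff₀ h3).2 (by linarith)
  have harg : ∀ s : ℝ, 1 < 2 / Real.sqrt 3 * Real.cosh (s / 4) := fun s => by
    have := Real.one_le_cosh (s / 4); nlinarith
  set ta := arccosh (2 / Real.sqrt 3 * Real.cosh (a / 4)) with hta
  set tb := arccosh (2 / Real.sqrt 3 * Real.cosh (b / 4)) with htb
  have hcta : Real.cosh ta = 2 / Real.sqrt 3 * Real.cosh (a / 4) :=
    cosh_arccosh (harg a).le
  have hctb : Real.cosh tb = 2 / Real.sqrt 3 * Real.cosh (b / 4) :=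
    cosh_arccosh (harg b).le
  have htan : 0 ≤ ta := arccosh_nonneg (harg a).le
  have htbn : 0 ≤ tb := arccosh_nonneg (harg b).le
  have htapos : 0 < ta := by
    rcases htan.lt_or_eq with h | h
    · exact h
    · exfalso
      have : Real.cosh ta = 1 := by rw [← h, Real.cosh_zero]
      rw [hcta] at this
      have := harg a
      linarith
  have htbpos : 0 < tb := by
    rcases htbn.lt_or_eq with h | h
    · exact h
    · exfalso
      have : Real.cosh tb = 1 := by rw [← h, Real.cosh_zero]
      rw [hctb] at this
      have := harg b
      linarith
  -- a/4 ≤ ta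
  have hale : a / 4 ≤ ta := by
    have hcle : Real.cosh (a / 4) ≤ Real.cosh ta := by
      rw [hcta]
      have := Real.one_le_cosh (a / 4)
      nlinarith
    have := Real.cosh_le_cosh.1 hcle
    rw [abs_of_nonneg (by linarith : (0:ℝ) ≤ a / 4), abs_of_nonneg htan] at this
    exact this
  set l := b / a with hl
  have hl1 : 1 ≤ l := (le_div_iff₀ ha).2 (by linarith)
  -- key: cosh tb ≤ cosh (l * ta)
  have hkey : Real.cosh tb ≤ Real.cosh (l * ta) := by
    have h := key_ineq (by linarith : (0:ℝ) ≤ a / 4) hale hl1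
    have hb4 : l * (a / 4) = b / 4 := by rw [hl]; field_simp
    rw [hb4] at h
    have hca : 0 < Real.cosh (a / 4) := Real.cosh_pos _
    rw [hcta] at h
    rw [hctb]
    nlinarith [h, hca]
  have htble : tb ≤ l * ta := by
    have := Real.cosh_le_cosh.1 hkey
    rw [abs_of_nonneg htbn, abs_of_nonneg (by positivity)] at this
    exact this
  -- finish
  have hfa : arccosh (4 / 3 * Real.cosh (a / 2) + 1 / 3) = 2 * ta := f_eq a ha.le
  have hfb : arccosh (4 / 3 * Real.cosh (b / 2) + 1 / 3) = 2 * tb := f_eq b (by linarith)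
  show a / arccosh (4 / 3 * Real.cosh (a / 2) + 1 / 3)
      ≤ b / arccosh (4 / 3 * Real.cosh (b / 2) + 1 / 3)
  rw [hfa, hfb, div_le_div_iff₀ (by linarith) (by linarith)]
  have : a * tb ≤ a * (l * ta) := by nlinarith
  have hla : a * (l * ta) = b * ta := by rw [hl]; field_simp
  nlinarith
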